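/- Let α > 0 be real. For all real t with |t| ≤ 1 and all real r with 0 < r < 1, (1 - 2rt + r²)^{-α} = Σ_{m=0}^∞ r^m C^α_m(t), where C^α_m is the Gegenbauer polynomial of degree m and index α. -/

import Mathlib

open Finset Complex

noncomputable section

/-- The Gegenbauer polynomial of degree `m` and index `α`. -/
def gegenbauer (α : ℝ) (m : ℕ) (t : ℝ) : ℝ :=
  ∑ j ∈ Finset.range (m / 2 + 1),
    (-1) ^ j * Real.Gamma (α + m - j) /
      (Real.Gamma α * Real.Gamma (j + 1) * Real.Gamma ((m : ℝ) + 1 - 2 * j)) *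
      (2 * t) ^ (m - 2 * j)


namespace GegenAux


/-- binomial series coefficient -/
def gc (α : ℝ) (k : ℕ) : ℝ := (ascPochhammer ℝ k).eval α / (Nat.factorial k)

lemma gc_nonneg {α : ℝ} (hα : 0 < α) (k : ℕ) : 0 ≤ gc α k :=
  div_nonneg (ascPochhammer_pos k α hα).le (Nat.cast_nonneg _)

lemma Gamma_ascPochhammer {α : ℝ} (hα : 0 < α) (n : ℕ) :
    Real.Gamma (α + n) = Real.Gamma α * (ascPochhammer ℝ n).eval α := by
  induction n with
  | zero => simp
  | succ n ih =>
      have h1 : α + (n + 1 : ℕ) = (α + n) + 1 := by push_cast; ring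
      have h2 : (α + (n : ℝ)) ≠ 0 := by positivity
      rw [h1, Real.Gamma_add_one h2, ih, ascPochhammer_succ_eval]
      ring

lemma slit_one_sub {u : ℂ} (hu : ‖u‖ < 1) : 1 - u ∈ Complex.slitPlane := by
  rw [sub_eq_add_neg]
  exact mem_slitPlane_of_norm_lt_one (by simpa using hu)

lemma isOpen_U : IsOpen {u : ℂ | 1 - u ∈ Complex.slitPlane} :=
  Complex.isOpen_slitPlane.preimage (by fun_prop)

lemma iteratedDeriv_one_sub_cpow (α : ℝ) (n : ℕ) :
    ∀ u ∈ {u : ℂ | 1 - u ∈ Complex.slitPlane},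
      iteratedDeriv n (fun w : ℂ => (1 - w) ^ (-(α : ℂ))) u
        = (((ascPochhammer ℝ n).eval α : ℝ) : ℂ) * (1 - u) ^ (-(α : ℂ) - n) := by
  induction n with
  | zero => intro u _; simp
  | succ n ih =>
      intro u hu
      have hev : iteratedDeriv n (fun w : ℂ => (1 - w) ^ (-(α : ℂ)))
          =ᶠ[nhds u] fun w => (((ascPochhammer ℝ n).eval α : ℝ) : ℂ) * (1 - w) ^ (-(α : ℂ) - n) :=
        Filter.eventuallyEq_of_mem (isOpen_U.mem_nhds hu) ih
      rw [iteratedDeriv_succ, hev.deriv_eq]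
      have hd : HasDerivAt (fun w : ℂ => (1 - w) ^ (-(α : ℂ) - n))
          ((-(α : ℂ) - n) * (1 - u) ^ (-(α : ℂ) - n - 1) * (-1)) u := by
        have h1 : HasDerivAt (fun w : ℂ => 1 - w) (-1) u := (hasDerivAt_id u).const_sub 1
        exact h1.cpow_const hu
      have := (hd.const_mul ((((ascPochhammer ℝ n).eval α : ℝ)) : ℂ)).deriv
      rw [this]
      have hexp : (-(α : ℂ) - n - 1) = -(α : ℂ) - (n + 1 : ℕ) := by push_cast; ring
      rw [hexp, ascPochhammer_succ_eval]
      push_cast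
      ring

lemma hasSum_binomial {α : ℝ} {u : ℂ} (hu : ‖u‖ < 1) :
    HasSum (fun n => (gc α n : ℂ) * u ^ n) ((1 - u) ^ (-(α : ℂ))) := by
  have hdiff : DifferentiableOn ℂ (fun w : ℂ => (1 - w) ^ (-(α : ℂ))) (Metric.ball 0 1) := by
    intro w hw
    refine DifferentiableAt.differentiableWithinAt ?_
    exact ((differentiableAt_const (1 : ℂ)).sub differentiableAt_id).cpow
      (differentiableAt_const _) (slit_one_sub (by simpa using hw))
  have H := Complex.hasSum_taylorSeries_on_ball hdiff (mem_ball_zero_iff.mpr hu)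
  have h0 : (0 : ℂ) ∈ {u : ℂ | 1 - u ∈ Complex.slitPlane} := by
    simp [Complex.mem_slitPlane_iff]
  have hcoef := iteratedDeriv_one_sub_cpow α
  have : (fun n : ℕ => ((n.factorial : ℂ))⁻¹ • (u - 0) ^ n •
      iteratedDeriv n (fun w : ℂ => (1 - w) ^ (-(α : ℂ))) 0)
      = fun n => (gc α n : ℂ) * u ^ n := by
    funext n
    rw [hcoef n 0 h0]
    simp only [sub_zero, smul_eq_mul, gc]
    rw [Complex.one_cpow]
    push_cast
    ring
  rw [this] at H
  exact H



lemma base_mem_slitPlane {t : ℝ} (ht : |t| ≤ 1) {z : ℂ} (hz : ‖z‖ < 1) :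
    1 - 2 * z * (t : ℂ) + z ^ 2 ∈ Complex.slitPlane := by
  rw [Complex.mem_slitPlane_iff]
  by_contra hcon
  push_neg at hcon
  obtain ⟨hre, him⟩ := hcon
  set x := z.re with hx
  set y := z.im with hy
  have hz2 : x ^ 2 + y ^ 2 < 1 := by
    have h1 : Real.sqrt (x ^ 2 + y ^ 2) < 1 := by
      simpa [Complex.norm_def, Complex.normSq_apply, sq] using hz
    nlinarith [Real.sq_sqrt (by positivity : (0:ℝ) ≤ x ^ 2 + y ^ 2),
      Real.sqrt_nonneg (x ^ 2 + y ^ 2)]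
  have hIm : (1 - 2 * z * (t : ℂ) + z ^ 2).im = 2 * y * (x - t) := by
    simp [Complex.add_im, Complex.sub_im, Complex.mul_im, Complex.mul_re, sq, ← hx, ← hy]
    ring
  have hRe : (1 - 2 * z * (t : ℂ) + z ^ 2).re = 1 - 2 * t * x + x ^ 2 - y ^ 2 := by
    simp [Complex.add_re, Complex.sub_re, Complex.mul_re, Complex.mul_im, sq, ← hx, ← hy]
    ring
  rw [him] at hIm
  rw [hRe] at hre
  have ht' := abs_le.mp ht
  rcases mul_eq_zero.mp (by linarith [hIm.symm] : 2 * y * (x - t) = 0) with h | h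
  · have hy0 : y = 0 := by rcases mul_eq_zero.mp h with h' | h' <;> linarith
    rw [hy0] at hre hz2
    nlinarith [sq_nonneg (1 - x), sq_nonneg (1 + x), sq_nonneg (x - t), sq_nonneg (x + t)]
  · have hxt : x = t := by linarith
    rw [hxt] at hre hz2
    nlinarith

lemma coeff_unique {f : ℂ → ℂ} {a b : ℕ → ℂ} {ε : ℝ} (hε : 0 < ε)
    (ha : ∀ z : ℂ, ‖z‖ < ε → HasSum (fun n => a n * z ^ n) (f z))
    (hb : ∀ z : ℂ, ‖z‖ < ε → HasSum (fun n => b n * z ^ n) (f z)) : a = b := by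
  have key : ∀ c : ℕ → ℂ, (∀ z : ℂ, ‖z‖ < ε → HasSum (fun n => c n * z ^ n) (f z)) →
      HasFPowerSeriesOnBall f (FormalMultilinearSeries.ofScalars ℂ c) 0 (ENNReal.ofReal ε) := by
    intro c hc
    refine ⟨?_, by simpa using hε, ?_⟩
    · refine ENNReal.le_of_forall_nnreal_lt fun ρ hρ => ?_
      have hρε : (ρ : ℝ) < ε := by
        rwa [← ENNReal.ofReal_coe_nnreal, ENNReal.ofReal_lt_ofReal_iff hε] at hρ
      have hsum := (hc ((ρ : ℝ) : ℂ) (by simpa [_root_.abs_of_nonneg ρ.2] using hρε)).summable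
      apply FormalMultilinearSeries.le_radius_of_tendsto
        (l := 0)
      have h0 := hsum.tendsto_atTop_zero
      have h1 : Filter.Tendsto (fun n => ‖c n * ((ρ : ℝ) : ℂ) ^ n‖) Filter.atTop (nhds 0) := by
        simpa using h0.norm
      have h2 : (fun n => ‖(FormalMultilinearSeries.ofScalars ℂ c) n‖ * (ρ : ℝ) ^ n)
          = fun n => ‖c n * ((ρ : ℝ) : ℂ) ^ n‖ := by
        funext n
        rw [FormalMultilinearSeries.ofScalars_norm, norm_mul, norm_pow, Complex.norm_real,
          Real.norm_eq_abs]
        simp [NNReal.abs_eq]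
      rw [h2]
      exact h1
    · intro y hy
      have hy' : ‖y‖ < ε := by
        rw [mem_emetric_ball_zero_iff, ← ofReal_norm_eq_enorm,
          ENNReal.ofReal_lt_ofReal_iff hε] at hy
        exact hy
      have := hc y hy'
      rw [zero_add]
      convert this using 2 with n
      · rfl
      rw [FormalMultilinearSeries.ofScalars_apply_eq]
      simp [smul_eq_mul, mul_comm]
  have := ((key a ha).hasFPowerSeriesAt).eq_formalMultilinearSeries ((key b hb).hasFPowerSeriesAt)
  exact FormalMultilinearSeries.ofScalars_series_injective ℂ ℂ this

lemma coeff_eq {α t : ℝ} (hα : 0 < α) {m j : ℕ} (h2j : 2 * j ≤ m) :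
    gc α (m - j) * ((m - j).choose j) * (2 * t) ^ (m - 2 * j) * (-1 : ℝ) ^ j
      = (-1) ^ j * Real.Gamma (α + m - j) /
          (Real.Gamma α * Real.Gamma (j + 1) * Real.Gamma ((m : ℝ) + 1 - 2 * j)) *
          (2 * t) ^ (m - 2 * j) := by
  have hjm : j ≤ m := by omega
  have hG1 : Real.Gamma (α + m - j) = Real.Gamma α * (ascPochhammer ℝ (m - j)).eval α := by
    have h : α + (m : ℝ) - j = α + ((m - j : ℕ) : ℝ) := by
      rw [Nat.cast_sub hjm]; ring
    rw [h, Gamma_ascPochhammer hα]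
  have hG2 : Real.Gamma ((j : ℝ) + 1) = (Nat.factorial j : ℝ) := Real.Gamma_nat_eq_factorial j
  have hG3 : Real.Gamma ((m : ℝ) + 1 - 2 * j) = (Nat.factorial (m - 2 * j) : ℝ) := by
    have h : (m : ℝ) + 1 - 2 * j = ((m - 2 * j : ℕ) : ℝ) + 1 := by
      rw [Nat.cast_sub h2j]; push_cast; ring
    rw [h, Real.Gamma_nat_eq_factorial]
  have hch : (((m - j).choose j : ℕ) : ℝ)
      = (Nat.factorial (m - j) : ℝ) / (Nat.factorial j * Nat.factorial (m - 2 * j)) := by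
    have hj2 : j ≤ m - j := by omega
    rw [Nat.cast_choose ℝ hj2]
    have h : m - j - j = m - 2 * j := by omega
    rw [h]
  rw [hG1, hG2, hG3, hch, gc]
  have nz1 : Real.Gamma α ≠ 0 := (Real.Gamma_pos_of_pos hα).ne'
  have nz2 : (Nat.factorial j : ℝ) ≠ 0 := Nat.cast_ne_zero.mpr (Nat.factorial_ne_zero _)
  have nz3 : (Nat.factorial (m - 2 * j) : ℝ) ≠ 0 := Nat.cast_ne_zero.mpr (Nat.factorial_ne_zero _)
  have nz4 : (Nat.factorial (m - j) : ℝ) ≠ 0 := Nat.cast_ne_zero.mpr (Nat.factorial_ne_zero _)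
  field_simp

lemma hasSum_small {α t : ℝ} (hα : 0 < α) (ht : |t| ≤ 1) {z : ℂ} (hz : ‖z‖ < 1 / 5) :
    HasSum (fun m => ((gegenbauer α m t : ℝ) : ℂ) * z ^ m)
      ((1 - 2 * z * (t : ℂ) + z ^ 2) ^ (-(α : ℂ))) := by
  have hzn : (0 : ℝ) ≤ ‖z‖ := norm_nonneg z
  have htn : (0 : ℝ) ≤ |t| := abs_nonneg t
  set x0 : ℝ := ‖z‖ * (‖z‖ + 2 * |t|) with hx0def
  have hx0 : x0 < 1 := by rw [hx0def]; nlinarith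
  have hx0n : 0 ≤ x0 := by positivity
  set f : ℕ × ℕ → ℂ := fun p =>
    (((if p.2 ≤ p.1 then gc α p.1 * (p.1.choose p.2) * (2 * t) ^ (p.1 - p.2) * (-1 : ℝ) ^ p.2
      else 0) : ℝ) : ℂ) * z ^ (p.1 + p.2) with hf
  -- row norms
  have hrow : ∀ k : ℕ, HasSum (fun j => ‖f (k, j)‖) (gc α k * x0 ^ k) := by
    intro k
    have hvan : ∀ j ∉ range (k + 1), ‖f (k, j)‖ = 0 := by
      intro j hj
      have : ¬ j ≤ k := by simpa [Nat.lt_succ_iff] using hj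
      simp [hf, this]
    have H := hasSum_sum_of_ne_finset_zero (L := SummationFilter.unconditional ℕ) (s := range (k + 1)) hvan
    convert H using 1
    have hsum : ∑ j ∈ range (k + 1), ‖f (k, j)‖
        = ∑ j ∈ range (k + 1), gc α k * ((k.choose j : ℝ) * ((2 * |t|) ^ (k - j) * ‖z‖ ^ (k + j))) := by
      refine Finset.sum_congr rfl fun j hj => ?_
      have hjk : j ≤ k := by simpa [Nat.lt_succ_iff] using hj
      simp only [hf, if_pos hjk, norm_mul, norm_pow, Complex.norm_real, Real.norm_eq_abs,
        abs_mul, abs_pow, abs_neg, abs_one, one_pow, abs_two,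
        Nat.abs_cast, _root_.abs_of_nonneg (gc_nonneg hα k)]
      ring
    rw [hsum, hx0def, mul_pow, add_pow, Finset.mul_sum, Finset.mul_sum]
    refine Finset.sum_congr rfl fun j hj => ?_
    rw [pow_add]
    ring
  have hbinR : Summable (fun k => gc α k * x0 ^ k) := by
    have hb := (hasSum_binomial (α := α) (u := ((x0 : ℝ) : ℂ))
      (by simpa [_root_.abs_of_nonneg hx0n] using hx0)).summable
    rw [← Complex.summable_ofReal]
    convert hb using 2 with k
    push_cast
    ring
  have hnorm : Summable (fun p : ℕ × ℕ => ‖f p‖) := by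
    refine (summable_prod_of_nonneg (fun p => norm_nonneg _)).mpr ⟨fun k => (hrow k).summable, ?_⟩
    apply Summable.congr hbinR
    intro k
    exact (hrow k).tsum_eq.symm
  have hfsummable : Summable f := hnorm.of_norm
  -- identify the sum via fiberwise rows (complex)
  have hu : ‖2 * z * (t : ℂ) - z ^ 2‖ < 1 := by
    have h1 : ‖2 * z * (t : ℂ) - z ^ 2‖ ≤ ‖2 * z * (t : ℂ)‖ + ‖z ^ 2‖ := norm_sub_le _ _
    have h2 : ‖2 * z * (t : ℂ)‖ = 2 * ‖z‖ * |t| := by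
      rw [norm_mul, norm_mul, Complex.norm_real, Real.norm_eq_abs]
      norm_num
    have h3 : ‖z ^ 2‖ = ‖z‖ ^ 2 := norm_pow z 2
    have : ‖2 * z * (t : ℂ) - z ^ 2‖ ≤ x0 := by
      rw [h2, h3] at h1; rw [hx0def]; nlinarith
    linarith
  have hrowC : ∀ k : ℕ, HasSum (fun j => f (k, j))
      ((gc α k : ℂ) * (2 * z * (t : ℂ) - z ^ 2) ^ k) := by
    intro k
    have hvan : ∀ j ∉ range (k + 1), f (k, j) = 0 := by
      intro j hj
      have : ¬ j ≤ k := by simpa [Nat.lt_succ_iff] using hj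
      simp [hf, this]
    have H := hasSum_sum_of_ne_finset_zero (L := SummationFilter.unconditional ℕ) (s := range (k + 1)) hvan
    convert H using 1
    have hsplit : (2 * z * (t : ℂ) - z ^ 2) ^ k = z ^ k * (-z + 2 * (t : ℂ)) ^ k := by
      rw [← mul_pow]; ring_nf
    rw [hsplit, add_pow, Finset.mul_sum, Finset.mul_sum]
    refine Finset.sum_congr rfl fun j hj => ?_
    have hjk : j ≤ k := by simpa [Nat.lt_succ_iff] using hj
    rw [hf]
    simp only [if_pos hjk]
    rw [pow_add, neg_pow]
    push_cast
    ring
  have hfHasSum : HasSum f ((1 - 2 * z * (t : ℂ) + z ^ 2) ^ (-(α : ℂ))) := by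
    have h1 : HasSum (fun k => (gc α k : ℂ) * (2 * z * (t : ℂ) - z ^ 2) ^ k)
        ((1 - (2 * z * (t : ℂ) - z ^ 2)) ^ (-(α : ℂ))) := hasSum_binomial hu
    have h2 : HasSum (fun k => (gc α k : ℂ) * (2 * z * (t : ℂ) - z ^ 2) ^ k)
        (∑' p : ℕ × ℕ, f p) := hfsummable.hasSum.prod_fiberwise hrowC
    have h3 := h2.unique h1
    have h4 : (1 - (2 * z * (t : ℂ) - z ^ 2)) = 1 - 2 * z * (t : ℂ) + z ^ 2 := by ring
    rw [h4] at h3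
    rw [← h3]
    exact hfsummable.hasSum
  -- reindex
  set h : ℕ × ℕ → ℂ := fun q =>
    (((if 2 * q.2 ≤ q.1 then
        gc α (q.1 - q.2) * ((q.1 - q.2).choose q.2) * (2 * t) ^ (q.1 - 2 * q.2) * (-1 : ℝ) ^ q.2
      else 0) : ℝ) : ℂ) * z ^ q.1 with hh
  have hcomp : h ∘ (fun p : ℕ × ℕ => (p.1 + p.2, p.2)) = f := by
    funext p
    simp only [hh, hf, Function.comp_apply]
    by_cases hj : p.2 ≤ p.1
    · have e1 : 2 * p.2 ≤ p.1 + p.2 := by omega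
      have e2 : p.1 + p.2 - p.2 = p.1 := by omega
      have e3 : p.1 + p.2 - 2 * p.2 = p.1 - p.2 := by omega
      rw [if_pos e1, if_pos hj, e2, e3]
    · rw [if_neg (by omega), if_neg hj]
  have hinj : Function.Injective (fun p : ℕ × ℕ => (p.1 + p.2, p.2)) := by
    intro p q hpq
    simp only [Prod.mk.injEq] at hpq
    obtain ⟨h1, h2⟩ := hpq
    exact Prod.ext (by omega) h2
  have hvan : ∀ q ∉ Set.range (fun p : ℕ × ℕ => (p.1 + p.2, p.2)), h q = 0 := by
    intro q hq
    by_cases h2 : 2 * q.2 ≤ q.1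
    · exact absurd ⟨(q.1 - q.2, q.2), by simp [Prod.ext_iff]; omega⟩ hq
    · simp [hh, h2]
  have hhHasSum : HasSum h ((1 - 2 * z * (t : ℂ) + z ^ 2) ^ (-(α : ℂ))) := by
    rw [← hinj.hasSum_iff hvan, hcomp]
    exact hfHasSum
  refine hhHasSum.prod_fiberwise fun m => ?_
  have hvan2 : ∀ j ∉ range (m / 2 + 1), h (m, j) = 0 := by
    intro j hj
    have h2j : ¬ (2 * j ≤ m) := by
      simp only [mem_range, Nat.lt_succ_iff] at hj; omega
    simp [hh, h2j]
  have H := hasSum_sum_of_ne_finset_zero (L := SummationFilter.unconditional ℕ) (s := range (m / 2 + 1)) hvan2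
  convert H using 1
  simp only [hh]
  rw [← Finset.sum_mul, ← Complex.ofReal_sum]
  congr 1
  rw [gegenbauer]
  refine congrArg _ (Finset.sum_congr rfl fun j hj => ?_)
  have h2j : 2 * j ≤ m := by
    simp only [mem_range, Nat.lt_succ_iff] at hj
    omega
  rw [if_pos h2j]
  exact (coeff_eq (t := t) hα h2j).symm


end GegenAux

/-- **Generating function of the Gegenbauer polynomials.** For `α > 0`, `|t| ≤ 1`, and
`0 < r < 1`: `(1 - 2rt + r²)^{-α} = Σ_{m=0}^∞ r^m C^α_m(t)`. -/
theorem gegenbauer_generating_function (α : ℝ) (hα : 0 < α)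
    (t r : ℝ) (ht : |t| ≤ 1) (hr0 : 0 < r) (hr1 : r < 1) :
    (1 - 2 * r * t + r ^ 2) ^ (-α) = ∑' m : ℕ, r ^ m * gegenbauer α m t := by
  classical
  set F : ℂ → ℂ := fun z => (1 - 2 * z * (t : ℂ) + z ^ 2) ^ (-(α : ℂ)) with hF
  have hdiffF : DifferentiableOn ℂ F (Metric.ball 0 1) := by
    intro z hz
    refine DifferentiableAt.differentiableWithinAt ?_
    have hbase : DifferentiableAt ℂ (fun z : ℂ => 1 - 2 * z * (t : ℂ) + z ^ 2) z := by
      fun_prop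
    exact hbase.cpow (differentiableAt_const _)
      (GegenAux.base_mem_slitPlane ht (mem_ball_zero_iff.mp hz))
  have htay : ∀ w : ℂ, ‖w‖ < 1 →
      HasSum (fun n => ((n.factorial : ℂ))⁻¹ * iteratedDeriv n F 0 * w ^ n) (F w) := by
    intro w hw
    have H := Complex.hasSum_taylorSeries_on_ball hdiffF (mem_ball_zero_iff.mpr hw)
    have : (fun n : ℕ => ((n.factorial : ℂ))⁻¹ • (w - 0) ^ n • iteratedDeriv n F 0)
        = fun n => ((n.factorial : ℂ))⁻¹ * iteratedDeriv n F 0 * w ^ n := by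
      funext n
      simp only [sub_zero, smul_eq_mul]
      ring
    rwa [this] at H
  have hsmall : ∀ w : ℂ, ‖w‖ < 1 / 5 →
      HasSum (fun n => ((gegenbauer α n t : ℝ) : ℂ) * w ^ n) (F w) := fun w hw =>
    GegenAux.hasSum_small hα ht hw
  have hab := GegenAux.coeff_unique (by norm_num : (0 : ℝ) < 1 / 5) hsmall
    (fun w hw => htay w (lt_trans hw (by norm_num)))
  have hr : ‖(r : ℂ)‖ < 1 := by
    rw [Complex.norm_real, Real.norm_eq_abs, abs_of_pos hr0]
    exact hr1
  have H := htay (r : ℂ) hr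
  have hfun : (fun n : ℕ => ((n.factorial : ℂ))⁻¹ * iteratedDeriv n F 0 * (r : ℂ) ^ n)
      = fun n => ((r ^ n * gegenbauer α n t : ℝ) : ℂ) := by
    funext n
    rw [← congrFun hab n]
    push_cast
    ring
  rw [hfun] at H
  have hpos : (0 : ℝ) ≤ 1 - 2 * r * t + r ^ 2 := by
    have ht' := abs_le.mp ht
    nlinarith [sq_nonneg (1 - r)]
  have hFr : F (r : ℂ) = ((1 - 2 * r * t + r ^ 2) ^ (-α) : ℝ) := by
    show ((1 : ℂ) - 2 * (r : ℂ) * (t : ℂ) + (r : ℂ) ^ 2) ^ (-(α : ℂ))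
      = ((1 - 2 * r * t + r ^ 2) ^ (-α) : ℝ)
    have hbase : (1 : ℂ) - 2 * (r : ℂ) * (t : ℂ) + (r : ℂ) ^ 2
        = ((1 - 2 * r * t + r ^ 2 : ℝ) : ℂ) := by push_cast; ring
    rw [hbase, show (-(α : ℂ)) = ((-α : ℝ) : ℂ) by push_cast; ring]
    exact (Complex.ofReal_cpow hpos (-α)).symm
  rw [hFr] at H
  exact (Complex.hasSum_ofReal.mp H).tsum_eq.symm

end
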